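/- Let (G, ψ) be a finite vertex-weighted graph over a poset P with at least one vertex. Suppose G is chordal, ψ(u) and ψ(v) are comparable for every edge {u,v}, and (G, ψ) contains no induced path v₁⋯v_k with k ≥ 3 and ψ(v₁) > ψ(v₂) = ⋯ = ψ(v_{k-1}) < ψ(v_k). Then there exists a simplicial vertex v of G such that ψ(v) ≤ ψ(u) for every neighbor u of v. -/

import Mathlib

variable {V P : Type*} [PartialOrder P]

/-- `v 0, v 1, …, v (k-1)` is a path in `G`: distinct vertices, consecutive ones adjacent. -/
def IsPathOn (G : SimpleGraph V) (k : ℕ) (v : ℕ → V) : Prop :=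
  (∀ i j, i < k → j < k → v i = v j → i = j) ∧ ∀ i, i + 1 < k → G.Adj (v i) (v (i + 1))

/-- `v 0, …, v (k-1)` is an induced path in `G`. -/
def IsInducedPathOn (G : SimpleGraph V) (k : ℕ) (v : ℕ → V) : Prop :=
  IsPathOn G k v ∧ ∀ i j, i < k → j < k → G.Adj (v i) (v j) → i + 1 = j ∨ j + 1 = i

/-- A vertex is simplicial if its neighborhood induces a complete subgraph. -/
def IsSimplicialVertex (G : SimpleGraph V) (v : V) : Prop :=
  ∀ a b, G.Adj v a → G.Adj v b → a ≠ b → G.Adj a b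

/-- `G` is chordal: every cycle of length at least four has a chord. -/
def IsChordalGraph (G : SimpleGraph V) : Prop :=
  ∀ (u : V) (c : G.Walk u u), c.IsCycle → 4 ≤ c.length →
    ∃ a b, a ∈ c.support ∧ b ∈ c.support ∧ G.Adj a b ∧ s(a, b) ∉ c.edges

namespace Stmt6Aux
/-- Build a walk from a sequence of adjacent vertices. -/
def walkOfSeq (G : SimpleGraph V) (v : ℕ → V) :
    (n : ℕ) → (∀ i, i < n → G.Adj (v i) (v (i + 1))) → G.Walk (v 0) (v n)
  | 0, _ => SimpleGraph.Walk.nil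
  | (n + 1), h =>
      (walkOfSeq G v n (fun i hi => h i (Nat.lt_succ_of_lt hi))).concat (h n (Nat.lt_succ_self n))

lemma walkOfSeq_length (G : SimpleGraph V) (v : ℕ → V) (n : ℕ)
    (h : ∀ i, i < n → G.Adj (v i) (v (i + 1))) : (walkOfSeq G v n h).length = n := by
  induction n with
  | zero => rfl
  | succ n ih => simp [walkOfSeq, SimpleGraph.Walk.length_concat, ih]

lemma walkOfSeq_support (G : SimpleGraph V) (v : ℕ → V) (n : ℕ)
    (h : ∀ i, i < n → G.Adj (v i) (v (i + 1))) :
    (walkOfSeq G v n h).support = (List.range (n + 1)).map v := by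
  induction n with
  | zero => simp [walkOfSeq, List.range_succ]
  | succ n ih =>
      simp only [walkOfSeq, SimpleGraph.Walk.support_concat, ih, List.range_succ (n := n + 1)]
      simp

lemma walkOfSeq_edges (G : SimpleGraph V) (v : ℕ → V) (n : ℕ)
    (h : ∀ i, i < n → G.Adj (v i) (v (i + 1))) :
    (walkOfSeq G v n h).edges = (List.range n).map (fun i => s(v i, v (i + 1))) := by
  induction n with
  | zero => rfl
  | succ n ih =>
      simp only [walkOfSeq, SimpleGraph.Walk.edges_concat, ih, List.range_succ (n := n)]
      simp

/-- A sequence of adjacent vertices from `x` to `y` whose interior lies in `W`. -/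
def GoodSeq (G : SimpleGraph V) (W : Set V) (x y : V) (n : ℕ) (v : ℕ → V) : Prop :=
  v 0 = x ∧ v n = y ∧ (∀ i, i < n → G.Adj (v i) (v (i + 1))) ∧
    ∀ t, 0 < t → t < n → v t ∈ W

lemma goodSeq_cut (G : SimpleGraph V) {W : Set V} {x y : V} {n : ℕ} {v : ℕ → V}
    (hg : GoodSeq G W x y n v) {i j : ℕ} (hij : i < j) (hjn : j ≤ n) (hv : v i = v j) :
    GoodSeq G W x y (n - (j - i)) (fun t => if t ≤ i then v t else v (t + (j - i))) := by
  obtain ⟨h0, hn, hadj, hW⟩ := hg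
  refine ⟨by simpa using h0, ?_, ?_, ?_⟩
  · by_cases hc : n - (j - i) ≤ i
    · have hji : j = n := by omega
      have hni : n - (j - i) = i := by omega
      rw [hni]
      simp only [if_pos le_rfl]
      rw [hv, hji]
      exact hn
    · have : n - (j - i) + (j - i) = n := by omega
      simp only [if_neg hc, this, hn]
  · intro t ht
    by_cases h1 : t + 1 ≤ i
    · simpa [show t ≤ i by omega, h1] using hadj t (by omega)
    · by_cases h2 : t ≤ i
      · have hti : t = i := by omega
        have hj : j < n := by omega
        subst hti
        simp only [if_pos h2, if_neg h1]
        rw [hv]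
        have : t + 1 + (j - t) = j + 1 := by omega
        rw [this]
        exact hadj j hj
      · simp only [if_neg h2, if_neg h1]
        have : t + 1 + (j - i) = t + (j - i) + 1 := by omega
        rw [this]
        exact hadj _ (by omega)
  · intro t ht htn
    by_cases h2 : t ≤ i
    · simpa [h2] using hW t ht (by omega)
    · simp only [if_neg h2]
      exact hW _ (by omega) (by omega)

lemma goodSeq_chordcut (G : SimpleGraph V) {W : Set V} {x y : V} {n : ℕ} {v : ℕ → V}
    (hg : GoodSeq G W x y n v) {i j : ℕ} (hij : i + 1 < j) (hjn : j ≤ n)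
    (hadj : G.Adj (v i) (v j)) :
    GoodSeq G W x y (n - (j - i - 1)) (fun t => if t ≤ i then v t else v (t + (j - i - 1))) := by
  obtain ⟨h0, hn, hadje, hW⟩ := hg
  have hni : i < n - (j - i - 1) := by omega
  refine ⟨by simpa using h0, ?_, ?_, ?_⟩
  · have : n - (j - i - 1) + (j - i - 1) = n := by omega
    simp only [if_neg (by omega : ¬ n - (j - i - 1) ≤ i), this, hn]
  · intro t ht
    by_cases h1 : t + 1 ≤ i
    · simpa [show t ≤ i by omega, h1] using hadje t (by omega)
    · by_cases h2 : t ≤ i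
      · have hti : t = i := by omega
        subst hti
        simp only [if_pos h2, if_neg h1]
        have : t + 1 + (j - t - 1) = j := by omega
        rw [this]
        exact hadj
      · simp only [if_neg h2, if_neg h1]
        have : t + 1 + (j - i - 1) = t + (j - i - 1) + 1 := by omega
        rw [this]
        exact hadje _ (by omega)
  · intro t ht htn
    by_cases h2 : t ≤ i
    · simpa [h2] using hW t ht (by omega)
    · simp only [if_neg h2]
      exact hW _ (by omega) (by omega)

/-- A minimum-length good sequence is an induced path. -/
lemma goodSeq_min (G : SimpleGraph V) {W : Set V} {x y : V} {n : ℕ} {v : ℕ → V}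
    (hg : GoodSeq G W x y n v) (hmin : ∀ m u, GoodSeq G W x y m u → n ≤ m) :
    (∀ i j, i ≤ n → j ≤ n → v i = v j → i = j) ∧
    (∀ i j, i ≤ n → j ≤ n → G.Adj (v i) (v j) → i + 1 = j ∨ j + 1 = i) := by
  constructor
  · have key : ∀ i j, i < j → j ≤ n → v i ≠ v j := by
      intro i j hij hjn hv
      have := hmin _ _ (goodSeq_cut G hg hij hjn hv)
      omega
    intro i j hi hj hv
    rcases lt_trichotomy i j with h | h | h
    · exact absurd hv (key i j h hj)
    · exact h
    · exact absurd hv.symm (key j i h hi)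
  · intro i j hi hj hadj
    have hne : i ≠ j := by rintro rfl; exact G.loopless.irrefl _ hadj
    rcases lt_trichotomy i j with h | h | h
    · left
      by_contra hc
      have := hmin _ _ (goodSeq_chordcut G hg (by omega : i + 1 < j) hj hadj)
      omega
    · omega
    · right
      by_contra hc
      have := hmin _ _ (goodSeq_chordcut G hg (by omega : j + 1 < i) hi hadj.symm)
      omega

lemma getVert_mem_of_closed {Hw : SimpleGraph V} {W : Set V}
    (hclosed : ∀ u v, u ∈ W → Hw.Adj u v → v ∈ W) :
    ∀ {p p' : V} (_ : p ∈ W) (wk : Hw.Walk p p') (t : ℕ), wk.getVert t ∈ W := by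
  intro p p' hp wk
  induction wk with
  | nil => intro t; simpa using hp
  | cons h q ih =>
      intro t
      cases t with
      | zero => simpa using hp
      | succ t => rw [SimpleGraph.Walk.getVert_cons_succ]; exact ih (hclosed _ _ hp h) t

/-- Existence of a good sequence from reachability in an auxiliary graph. -/
lemma goodSeq_exists (G : SimpleGraph V) {W : Set V} {Hw : SimpleGraph V}
    (hsub : ∀ u v, Hw.Adj u v → G.Adj u v)
    (hclosed : ∀ u v, u ∈ W → Hw.Adj u v → v ∈ W)
    {x y p p' : V} (hp : p ∈ W) (hr : Hw.Reachable p p')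
    (hxp : G.Adj x p) (hp'y : G.Adj p' y) :
    ∃ n w, GoodSeq G W x y n w := by
  obtain ⟨wk⟩ := hr
  set L := wk.length with hL
  refine ⟨L + 2, fun t => if t = 0 then x else if t ≤ L + 1 then wk.getVert (t - 1) else y,
    by simp, by simp, ?_, ?_⟩
  · intro i hi
    rcases Nat.eq_zero_or_pos i with rfl | hi0
    · simpa using hxp
    · by_cases hiL : i ≤ L
      · have h1 : i - 1 < L := by omega
        have := hsub _ _ (wk.adj_getVert_succ h1)
        have hrw : i - 1 + 1 = i := by omega
        rw [hrw] at this
        simpa [Nat.pos_iff_ne_zero.mp hi0, show i ≤ L + 1 by omega,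
          show i + 1 ≤ L + 1 by omega, show i + 1 ≠ 0 by omega] using this
      · have hieq : i = L + 1 := by omega
        subst hieq
        have : wk.getVert L = p' := by rw [hL]; exact wk.getVert_length
        simpa [this] using hp'y
  · intro t ht htn
    have h1 : t ≠ 0 := by omega
    have h2 : t ≤ L + 1 := by omega
    simp only [h1, if_neg h1, if_pos h2]
    exact getVert_mem_of_closed hclosed hp wk (t - 1)


lemma sep_clique (G : SimpleGraph V) (hch : IsChordalGraph G) {Ca Cb : Set V} {x y : V}
    (hxy : x ≠ y)
    (hdisj : ∀ z, z ∈ Ca → z ∉ Cb)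
    (hxCa : x ∉ Ca) (hxCb : x ∉ Cb) (hyCa : y ∉ Ca) (hyCb : y ∉ Cb)
    (hnoedge : ∀ u w, u ∈ Ca → w ∈ Cb → ¬ G.Adj u w)
    (hex1 : ∃ n v, GoodSeq G Ca x y n v) (hex2 : ∃ n v, GoodSeq G Cb x y n v) :
    G.Adj x y := by
  classical
  by_contra hne
  obtain ⟨n1, hQ1, min1⟩ : ∃ m, (∃ w, GoodSeq G Ca x y m w) ∧
      ∀ k, (∃ w, GoodSeq G Ca x y k w) → m ≤ k :=
    ⟨Nat.find hex1, Nat.find_spec hex1, fun k hk => Nat.find_min' hex1 hk⟩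
  obtain ⟨v1, g1⟩ := hQ1
  have min1' : ∀ m u, GoodSeq G Ca x y m u → n1 ≤ m := fun m u hu => min1 m ⟨u, hu⟩
  obtain ⟨inj1, ind1⟩ := goodSeq_min G g1 min1'
  obtain ⟨ha0, ha1, haadj, haW⟩ := g1
  obtain ⟨n2, hQ2, min2⟩ : ∃ m, (∃ w, GoodSeq G Cb x y m w) ∧
      ∀ k, (∃ w, GoodSeq G Cb x y k w) → m ≤ k :=
    ⟨Nat.find hex2, Nat.find_spec hex2, fun k hk => Nat.find_min' hex2 hk⟩
  obtain ⟨v2, g2⟩ := hQ2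
  have min2' : ∀ m u, GoodSeq G Cb x y m u → n2 ≤ m := fun m u hu => min2 m ⟨u, hu⟩
  obtain ⟨inj2, ind2⟩ := goodSeq_min G g2 min2'
  obtain ⟨hb0, hb1, hbadj, hbW⟩ := g2
  have hn1_2 : 2 ≤ n1 := by
    by_contra h
    interval_cases n1
    · exact hxy (ha0.symm.trans ha1)
    · have h01 := haadj 0 (by norm_num)
      rw [ha0] at h01
      rw [show (0 + 1 : ℕ) = 1 by norm_num, ha1] at h01
      exact hne h01
  have hn2_2 : 2 ≤ n2 := by
    by_contra h
    interval_cases n2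
    · exact hxy (hb0.symm.trans hb1)
    · have h01 := hbadj 0 (by norm_num)
      rw [hb0] at h01
      rw [show (0 + 1 : ℕ) = 1 by norm_num, hb1] at h01
      exact hne h01
  set n := n1 + n2 with hndef
  have hn4 : 4 ≤ n := by omega
  set cyc : ℕ → V := fun t => if t ≤ n1 then v1 t else v2 (n - t) with hcycdef
  have hcyc1 : ∀ t, t ≤ n1 → cyc t = v1 t := fun t ht => if_pos ht
  have hcyc2 : ∀ t, n1 ≤ t → cyc t = v2 (n - t) := by
    intro t ht
    by_cases h : t ≤ n1
    · have heq : t = n1 := le_antisymm h ht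
      subst heq
      rw [hcyc1 t le_rfl, ha1, show n - t = n2 by omega, hb1]
    · simp only [hcycdef, if_neg h]
  have hc0 : cyc 0 = x := by rw [hcyc1 0 (by omega), ha0]
  have hcn : cyc n = x := by rw [hcyc2 n (by omega), show n - n = 0 by omega, hb0]
  have hcn1 : cyc n1 = y := by rw [hcyc1 n1 le_rfl, ha1]
  have hadjc : ∀ i, i < n → G.Adj (cyc i) (cyc (i + 1)) := by
    intro i hi
    by_cases h1 : i + 1 ≤ n1
    · rw [hcyc1 i (by omega), hcyc1 (i + 1) h1]
      exact haadj i (by omega)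
    · have hi1 : n1 ≤ i := by omega
      rw [hcyc2 i hi1, hcyc2 (i + 1) (by omega)]
      have hb := hbadj (n - i - 1) (by omega)
      rw [show n - i - 1 + 1 = n - i by omega] at hb
      rw [show n - (i + 1) = n - i - 1 by omega]
      exact hb.symm
  have hclass : ∀ t, t ≤ n → (cyc t = x ∧ (t = 0 ∨ t = n)) ∨ (cyc t = y ∧ t = n1) ∨
      (cyc t ∈ Ca ∧ 0 < t ∧ t < n1) ∨ (cyc t ∈ Cb ∧ n1 < t ∧ t < n) := by
    intro t ht
    by_cases h0 : t = 0
    · subst h0; exact Or.inl ⟨hc0, Or.inl rfl⟩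
    by_cases h1 : t < n1
    · exact Or.inr (Or.inr (Or.inl ⟨by rw [hcyc1 t (by omega)]; exact haW t (by omega) h1,
        by omega, h1⟩))
    by_cases h2 : t = n1
    · subst h2; exact Or.inr (Or.inl ⟨hcn1, rfl⟩)
    by_cases h3 : t < n
    · refine Or.inr (Or.inr (Or.inr ⟨?_, by omega, h3⟩))
      rw [hcyc2 t (by omega)]
      exact hbW (n - t) (by omega) (by omega)
    · have heq : t = n := by omega
      subst heq
      exact Or.inl ⟨hcn, Or.inr rfl⟩
  have hpos : ∀ s t, s ≤ n → t ≤ n → cyc s = cyc t →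
      s = t ∨ s = 0 ∧ t = n ∨ s = n ∧ t = 0 := by
    intro s t hs ht he
    rcases hclass s hs with ⟨e1, p1⟩ | ⟨e1, p1⟩ | ⟨m1, p1, q1⟩ | ⟨m1, p1, q1⟩ <;>
      rcases hclass t ht with ⟨e2, p2⟩ | ⟨e2, p2⟩ | ⟨m2, p2, q2⟩ | ⟨m2, p2, q2⟩
    · omega
    · exact absurd (by rw [← e1, he, e2] : x = y) hxy
    · exfalso; rw [he] at e1; rw [e1] at m2; exact hxCa m2
    · exfalso; rw [he] at e1; rw [e1] at m2; exact hxCb m2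
    · exact absurd (by rw [← e2, ← he, e1] : x = y) hxy
    · omega
    · exfalso; rw [he] at e1; rw [e1] at m2; exact hyCa m2
    · exfalso; rw [he] at e1; rw [e1] at m2; exact hyCb m2
    · exfalso; rw [← he] at e2; rw [e2] at m1; exact hxCa m1
    · exfalso; rw [← he] at e2; rw [e2] at m1; exact hyCa m1
    · left
      exact inj1 s t (by omega) (by omega)
        (by rw [← hcyc1 s (by omega), ← hcyc1 t (by omega)]; exact he)
    · exfalso; rw [he] at m1; exact hdisj _ m1 m2
    · exfalso; rw [← he] at e2; rw [e2] at m1; exact hxCb m1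
    · exfalso; rw [← he] at e2; rw [e2] at m1; exact hyCb m1
    · exfalso; rw [he] at m1; exact hdisj _ m2 m1
    · have h := inj2 (n - s) (n - t) (by omega) (by omega)
        (by rw [← hcyc2 s (by omega), ← hcyc2 t (by omega)]; exact he)
      omega
  have hc' : cyc n = cyc 0 := by rw [hcn, hc0]
  set c : G.Walk (cyc 0) (cyc 0) := (walkOfSeq G cyc n hadjc).copy rfl hc' with hcdef
  have hlen : c.length = n := by
    rw [hcdef, SimpleGraph.Walk.length_copy, walkOfSeq_length]
  have hsupp : c.support = (List.range (n + 1)).map cyc := by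
    rw [hcdef, SimpleGraph.Walk.support_copy, walkOfSeq_support]
  have hedges : c.edges = (List.range n).map (fun i => s(cyc i, cyc (i + 1))) := by
    rw [hcdef, SimpleGraph.Walk.edges_copy, walkOfSeq_edges]
  have hcyclec : c.IsCycle := by
    rw [SimpleGraph.Walk.isCycle_def]
    refine ⟨(SimpleGraph.Walk.isTrail_def c).mpr ?_, ?_, ?_⟩
    · rw [hedges]
      refine List.Nodup.map_on ?_ List.nodup_range
      intro i hi j hj hij
      rw [List.mem_range] at hi hj
      rcases Sym2.eq_iff.mp hij with ⟨e1, e2⟩ | ⟨e1, e2⟩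
      · have d1 := hpos i j (by omega) (by omega) e1
        omega
      · have d1 := hpos i (j + 1) (by omega) (by omega) e1
        have d2 := hpos (i + 1) j (by omega) (by omega) e2
        omega
    · intro hnil
      rw [hnil] at hlen
      simp at hlen
      omega
    · rw [hsupp, List.range_succ_eq_map]
      simp only [List.map_cons, List.tail_cons, List.map_map]
      refine List.Nodup.map_on ?_ List.nodup_range
      intro i hi j hj hij
      rw [List.mem_range] at hi hj
      have := hpos (i + 1) (j + 1) (by omega) (by omega) (by simpa using hij)
      omega
  have hedgemem : ∀ i, i < n → s(cyc i, cyc (i + 1)) ∈ c.edges := by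
    intro i hi
    rw [hedges]
    exact List.mem_map.mpr ⟨i, List.mem_range.mpr hi, rfl⟩
  have hpart1 : ∀ p q, p ≤ n1 → q ≤ n1 → G.Adj (cyc p) (cyc q) →
      s(cyc p, cyc q) ∈ c.edges := by
    intro p q hp hq hadj
    have hadj' : G.Adj (v1 p) (v1 q) := by rw [← hcyc1 p hp, ← hcyc1 q hq]; exact hadj
    rcases ind1 p q hp hq hadj' with h | h
    · rw [← h]
      exact hedgemem p (by omega)
    · rw [← h, Sym2.eq_swap]
      exact hedgemem q (by omega)
  have hpart2 : ∀ p q, n1 ≤ p → p ≤ n → n1 ≤ q → q ≤ n → G.Adj (cyc p) (cyc q) →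
      s(cyc p, cyc q) ∈ c.edges := by
    intro p q hp1 hp2 hq1 hq2 hadj
    have hadj' : G.Adj (v2 (n - p)) (v2 (n - q)) := by
      rw [← hcyc2 p hp1, ← hcyc2 q hq1]; exact hadj
    rcases ind2 (n - p) (n - q) (by omega) (by omega) hadj' with h | h
    · have hqp : q + 1 = p := by omega
      rw [← hqp, Sym2.eq_swap]
      exact hedgemem q (by omega)
    · have hpq : p + 1 = q := by omega
      rw [← hpq]
      exact hedgemem p (by omega)
  have master : ∀ p q, p ≤ n → q ≤ n → G.Adj (cyc p) (cyc q) →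
      s(cyc p, cyc q) ∈ c.edges := by
    intro p q hp hq hadj
    rcases hclass p hp with ⟨e1, p1⟩ | ⟨e1, p1⟩ | ⟨m1, p1, q1⟩ | ⟨m1, p1, q1⟩ <;>
      rcases hclass q hq with ⟨e2, p2⟩ | ⟨e2, p2⟩ | ⟨m2, p2, q2⟩ | ⟨m2, p2, q2⟩
    · exfalso; rw [e1, e2] at hadj; exact G.loopless.irrefl _ hadj
    · exfalso; rw [e1, e2] at hadj; exact hne hadj
    · have e0 : cyc p = cyc 0 := by rw [e1, hc0]
      rw [e0] at hadj ⊢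
      exact hpart1 0 q (by omega) (by omega) hadj
    · have e0 : cyc p = cyc n := by rw [e1, hcn]
      rw [e0] at hadj ⊢
      exact hpart2 n q (by omega) le_rfl (by omega) hq hadj
    · exfalso; rw [e1, e2] at hadj; exact hne hadj.symm
    · exfalso; rw [e1, e2] at hadj; exact G.loopless.irrefl _ hadj
    · exact hpart1 p q (by omega) (by omega) hadj
    · exact hpart2 p q (by omega) (by omega) (by omega) (by omega) hadj
    · have e0 : cyc q = cyc 0 := by rw [e2, hc0]
      rw [e0] at hadj ⊢
      exact hpart1 p 0 (by omega) (by omega) hadj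
    · exact hpart1 p q (by omega) (by omega) hadj
    · exact hpart1 p q (by omega) (by omega) hadj
    · exfalso; exact hnoedge _ _ m1 m2 hadj
    · have e0 : cyc q = cyc n := by rw [e2, hcn]
      rw [e0] at hadj ⊢
      exact hpart2 p n (by omega) (by omega) (by omega) le_rfl hadj
    · exact hpart2 p q (by omega) (by omega) (by omega) (by omega) hadj
    · exfalso; exact hnoedge _ _ m2 m1 hadj.symm
    · exact hpart2 p q (by omega) (by omega) (by omega) (by omega) hadj
  obtain ⟨a, b, hamem, hbmem, hab, hnotedge⟩ := hch (cyc 0) c hcyclec (by rw [hlen]; omega)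
  rw [hsupp] at hamem hbmem
  obtain ⟨i, hi, rfl⟩ := List.mem_map.mp hamem
  obtain ⟨j, hj, rfl⟩ := List.mem_map.mp hbmem
  rw [List.mem_range] at hi hj
  exact hnotedge (master i j (by omega) (by omega) hab)



lemma chordal_induce (G : SimpleGraph V) (hch : IsChordalGraph G) (s : Set V) :
    IsChordalGraph (G.induce s) := by
  intro u c hc hlen
  set f := (SimpleGraph.Embedding.induce s (G := G)).toHom with hf
  have hinj : Function.Injective f := Subtype.val_injective
  have hc' : (c.map f).IsCycle := hc.map hinj
  obtain ⟨a, b, ha, hb, hab, hnab⟩ := hch u (c.map f) hc'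
    (by show 4 ≤ (c.map f).length; rw [SimpleGraph.Walk.length_map]; exact hlen)
  replace ha : a ∈ (c.map f).support := ha
  replace hb : b ∈ (c.map f).support := hb
  rw [SimpleGraph.Walk.support_map] at ha hb
  obtain ⟨a', ha', rfl⟩ := List.mem_map.mp ha
  obtain ⟨b', hb', rfl⟩ := List.mem_map.mp hb
  refine ⟨a', b', ha', hb', hab, fun hmem => hnab ?_⟩
  show _ ∈ (c.map f).edges
  rw [SimpleGraph.Walk.edges_map]
  exact List.mem_map.mpr ⟨s(a', b'), hmem, rfl⟩


universe u

lemma dirac (N : ℕ) : ∀ {W : Type u} [Fintype W] (G : SimpleGraph W),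
    Fintype.card W ≤ N → IsChordalGraph G →
    (∀ x y : W, x ≠ y → G.Adj x y) ∨
    ∃ a b : W, a ≠ b ∧ ¬ G.Adj a b ∧ IsSimplicialVertex G a ∧ IsSimplicialVertex G b := by
  induction N with
  | zero =>
      intro W _ G hcard hch
      left
      intro x y hxy
      exfalso
      have : 0 < Fintype.card W := Fintype.card_pos_iff.mpr ⟨x⟩
      omega
  | succ N ih =>
      intro W _ G hcard hch
      classical
      by_cases hcomp : ∀ x y : W, x ≠ y → G.Adj x y
      · exact Or.inl hcomp
      right
      push_neg at hcomp
      obtain ⟨a, b, hab, hnadj⟩ := hcomp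
      set Gdel : Finset W → SimpleGraph W := fun S =>
        { Adj := fun u v => G.Adj u v ∧ u ∉ S ∧ v ∉ S
          symm := ⟨fun u v h => ⟨h.1.symm, h.2.2, h.2.1⟩⟩
          loopless := ⟨fun u h => G.loopless.irrefl u h.1⟩ } with hGdel
      have hGdelAdj : ∀ (S : Finset W) (u v : W), (Gdel S).Adj u v ↔
          G.Adj u v ∧ u ∉ S ∧ v ∉ S := fun S u v => Iff.rfl
      have hsep0 : ∃ S : Finset W, a ∉ S ∧ b ∉ S ∧ ¬ (Gdel S).Reachable a b := by
        refine ⟨Finset.univ.filter (fun z => z ≠ a ∧ z ≠ b), by simp, by simp, ?_⟩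
        rintro ⟨w⟩
        cases w with
        | nil => exact hab rfl
        | cons h w' =>
            rename_i c
            have hc := h.2.2
            simp only [Finset.mem_filter, Finset.mem_univ, true_and, not_and, not_not] at hc
            have hca : c ≠ a := fun h' => G.loopless.irrefl a (h' ▸ h.1)
            exact hnadj (hc hca ▸ h.1)
      obtain ⟨S, hSmem, hSmin⟩ := Finset.exists_min_image
        (Finset.univ.filter (fun S : Finset W => a ∉ S ∧ b ∉ S ∧ ¬ (Gdel S).Reachable a b))
        Finset.card (by obtain ⟨S0, h0⟩ := hsep0; exact ⟨S0, by simpa using h0⟩)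
      rw [Finset.mem_filter] at hSmem
      obtain ⟨-, haS, hbS, hsepS⟩ := hSmem
      set Gs := Gdel S with hGs
      set Ca : Set W := {v | Gs.Reachable a v} with hCa
      set Cb : Set W := {v | Gs.Reachable b v} with hCb
      have key : ∀ (u v : W), Gs.Reachable u v → u ∉ S → v ∉ S := by
        intro u v h
        obtain ⟨w⟩ := h
        induction w with
        | nil => exact id
        | cons h' w ih2 => exact fun _ => ih2 h'.2.2
      have keyCa : ∀ v ∈ Ca, v ∉ S := fun v hv => key a v hv haS
      have keyCb : ∀ v ∈ Cb, v ∉ S := fun v hv => key b v hv hbS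
      have hclosedCa : ∀ u v, u ∈ Ca → Gs.Adj u v → v ∈ Ca :=
        fun u v hu h => hu.trans h.reachable
      have hclosedCb : ∀ u v, u ∈ Cb → Gs.Adj u v → v ∈ Cb :=
        fun u v hu h => hu.trans h.reachable
      have hdisjCab : ∀ z, z ∈ Ca → z ∉ Cb :=
        fun z hz hz' => hsepS (hz.trans hz'.symm)
      have hCaCb : ∀ u w, u ∈ Ca → w ∈ Cb → ¬ G.Adj u w := by
        intro u w hu hw hadj
        exact hsepS (hu.trans ((SimpleGraph.Adj.reachable
          (⟨hadj, keyCa u hu, keyCb w hw⟩ : Gs.Adj u w)).trans hw.symm))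
      -- every separator vertex has neighbours in both components
      have hxside : ∀ x ∈ S, (∃ p, p ∈ Ca ∧ G.Adj x p) ∧ (∃ q, q ∈ Cb ∧ G.Adj x q) := by
        intro x hx
        have hcard' : (S.erase x).card < S.card := Finset.card_erase_lt_of_mem hx
        have hreach' : (Gdel (S.erase x)).Reachable a b := by
          by_contra hr
          have hmem : S.erase x ∈ Finset.univ.filter
              (fun T : Finset W => a ∉ T ∧ b ∉ T ∧ ¬ (Gdel T).Reachable a b) := by
            refine Finset.mem_filter.mpr ⟨Finset.mem_univ _,
              fun h => haS (Finset.mem_of_mem_erase h),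
              fun h => hbS (Finset.mem_of_mem_erase h), hr⟩
          have := hSmin _ hmem
          omega
        have L : ∀ (u v : W) (w : (Gdel (S.erase x)).Walk u v), u ∉ S →
            (v ∉ S ∧ Gs.Reachable u v) ∨ ∃ p, p ∉ S ∧ Gs.Reachable u p ∧ G.Adj p x := by
          intro u v w
          induction w with
          | nil => exact fun hu => Or.inl ⟨hu, SimpleGraph.Reachable.refl _⟩
          | @cons u c v h w' ih2 =>
              intro hu
              by_cases hc : c = x
              · subst hc
                exact Or.inr ⟨u, hu, SimpleGraph.Reachable.refl _, h.1⟩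
              · have hcS : c ∉ S := fun hcS => h.2.2 (Finset.mem_erase.mpr ⟨hc, hcS⟩)
                have hGsadj : Gs.Adj u c := ⟨h.1, hu, hcS⟩
                rcases ih2 hcS with ⟨hv, hr⟩ | ⟨p, hp, hr, hpx⟩
                · exact Or.inl ⟨hv, hGsadj.reachable.trans hr⟩
                · exact Or.inr ⟨p, hp, hGsadj.reachable.trans hr, hpx⟩
        obtain ⟨w⟩ := hreach'
        constructor
        · rcases L a b w haS with ⟨_, hr⟩ | ⟨p, hp, hr, hpx⟩
          · exact absurd hr hsepS
          · exact ⟨p, hr, hpx.symm⟩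
        · rcases L b a w.reverse hbS with ⟨_, hr⟩ | ⟨q, hq, hr, hqx⟩
          · exact absurd hr.symm hsepS
          · exact ⟨q, hr, hqx.symm⟩
      -- S is a clique
      have hclique : ∀ x y : W, x ∈ S → y ∈ S → x ≠ y → G.Adj x y := by
        intro x y hxS hyS hxy
        obtain ⟨⟨p, hpCa, hxp⟩, ⟨p2, hp2Cb, hxp2⟩⟩ := hxside x hxS
        obtain ⟨⟨q, hqCa, hyq⟩, ⟨q2, hq2Cb, hyq2⟩⟩ := hxside y hyS
        have hxCa : x ∉ Ca := fun h => keyCa x h hxS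
        have hxCb : x ∉ Cb := fun h => keyCb x h hxS
        have hyCa : y ∉ Ca := fun h => keyCa y h hyS
        have hyCb : y ∉ Cb := fun h => keyCb y h hyS
        refine sep_clique G hch hxy hdisjCab hxCa hxCb hyCa hyCb hCaCb ?_ ?_
        · exact goodSeq_exists G (Hw := Gs) (fun u v h => h.1) hclosedCa hpCa
            (hpCa.symm.trans hqCa) hxp hyq.symm
        · exact goodSeq_exists G (Hw := Gs) (fun u v h => h.1) hclosedCb hp2Cb
            (hp2Cb.symm.trans hq2Cb) hxp2 hyq2.symm
      -- find a simplicial vertex inside a component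
      have side : ∀ (C : Set W) (c0 : W), c0 ∈ C →
          (∀ v ∈ C, v ∉ S) → (∀ u v, u ∈ C → Gs.Adj u v → v ∈ C) →
          (∃ m : W, m ∉ C ∧ m ∉ S) →
          ∃ z, z ∈ C ∧ IsSimplicialVertex G z := by
        rintro C c0 hc0 hCS hclosed ⟨m, hmC, hmS⟩
        have hnbgen : ∀ z, z ∈ C → ∀ w, G.Adj z w → w ∈ C ∪ ↑S := by
          intro z hz w hw
          by_cases hwS : w ∈ S
          · exact Or.inr hwS
          · exact Or.inl (hclosed z w hz ⟨hw, hCS z hz, hwS⟩)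
        have hcard2 : Fintype.card ↥(C ∪ ↑S : Set W) ≤ N := by
          have hlt : Fintype.card ↥(C ∪ ↑S : Set W) < Fintype.card W := by
            refine Fintype.card_lt_of_injective_of_notMem (b := m) Subtype.val
              Subtype.val_injective ?_
            rintro ⟨z, rfl⟩
            rcases z.2 with h | h
            · exact hmC h
            · exact hmS h
          omega
        rcases ih (G.induce (C ∪ ↑S)) hcard2 (chordal_induce G hch _) with
          hcomp2 | ⟨z1, z2, hz12, hznadj, hs1, hs2⟩
        · refine ⟨c0, hc0, ?_⟩
          intro p q hp hq hpq
          exact hcomp2 ⟨p, hnbgen c0 hc0 p hp⟩ ⟨q, hnbgen c0 hc0 q hq⟩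
            (fun h => hpq (congrArg Subtype.val h))
        · have hnot : ¬ ((z1 : W) ∈ S ∧ (z2 : W) ∈ S) := by
            rintro ⟨h1, h2⟩
            exact hznadj (hclique _ _ h1 h2 (fun h => hz12 (Subtype.ext h)))
          have pick : ∃ z : ↥(C ∪ ↑S : Set W), (z : W) ∈ C ∧
              IsSimplicialVertex (G.induce (C ∪ ↑S)) z := by
            by_cases h1 : (z1 : W) ∈ S
            · have h2 : (z2 : W) ∉ S := fun h => hnot ⟨h1, h⟩
              refine ⟨z2, ?_, hs2⟩
              rcases z2.2 with h | h
              · exact h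
              · exact absurd h h2
            · refine ⟨z1, ?_, hs1⟩
              rcases z1.2 with h | h
              · exact h
              · exact absurd h h1
          obtain ⟨z, hzC, hzs⟩ := pick
          refine ⟨z, hzC, ?_⟩
          intro p q hp hq hpq
          exact hzs ⟨p, hnbgen z hzC p hp⟩ ⟨q, hnbgen z hzC q hq⟩ hp hq
            (fun h => hpq (congrArg Subtype.val h))
      obtain ⟨za, hzaCa, hzasimp⟩ := side Ca a (SimpleGraph.Reachable.refl a) keyCa hclosedCa
        ⟨b, fun h => hsepS h, hbS⟩
      obtain ⟨zb, hzbCb, hzbsimp⟩ := side Cb b (SimpleGraph.Reachable.refl b) keyCb hclosedCb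
        ⟨a, fun h => hsepS h.symm, haS⟩
      refine ⟨za, zb, ?_, ?_, hzasimp, hzbsimp⟩
      · exact fun h => hdisjCab za hzaCa (h ▸ hzbCb)
      · exact fun h => hCaCb za zb hzaCa hzbCb h


end Stmt6Aux

open Stmt6Aux in
theorem stmt6 [Fintype V] [Nonempty V] (G : SimpleGraph V) (ψ : V → P)
    (hchordal : IsChordalGraph G)
    (hcomp : ∀ u v : V, G.Adj u v → ψ u ≤ ψ v ∨ ψ v ≤ ψ u)
    (hnopath : ¬ ∃ (k : ℕ) (v : ℕ → V), 3 ≤ k ∧ IsInducedPathOn G k v ∧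
      ψ (v 1) < ψ (v 0) ∧ (∀ j, 0 < j → j < k - 1 → ψ (v j) = ψ (v 1)) ∧
      ψ (v 1) < ψ (v (k - 1))) :
    ∃ v : V, IsSimplicialVertex G v ∧ ∀ u : V, G.Adj v u → ψ v ≤ ψ u := by
  classical
  obtain ⟨v00⟩ := (inferInstance : Nonempty V)
  obtain ⟨m, hmmem, hmmin⟩ : ∃ m ∈ Finset.univ.image ψ, ∀ x ∈ Finset.univ.image ψ, ¬ x < m := by
    obtain ⟨m, hm⟩ := Finset.exists_minimal (s := Finset.univ.image ψ)
      ⟨ψ v00, Finset.mem_image_of_mem _ (Finset.mem_univ _)⟩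
    exact ⟨m, hm.prop, fun x hx => hm.not_lt hx⟩
  obtain ⟨z0, -, hz0⟩ := Finset.mem_image.mp hmmem
  have hge : ∀ u v, G.Adj u v → ψ u = m → m ≤ ψ v := by
    intro u v hadj hu
    rcases hcomp u v hadj with h | h
    · rw [hu] at h; exact h
    · rw [hu] at h
      have hnlt : ¬ ψ v < m := hmmin _ (Finset.mem_image_of_mem ψ (Finset.mem_univ v))
      have : ψ v = m := by
        by_contra hne
        exact hnlt (lt_of_le_of_ne h hne)
      exact this.ge
  set Gm : SimpleGraph V :=
    { Adj := fun u v => G.Adj u v ∧ ψ u = m ∧ ψ v = m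
      symm := ⟨fun u v h => ⟨h.1.symm, h.2.2, h.2.1⟩⟩
      loopless := ⟨fun u h => G.loopless.irrefl u h.1⟩ } with hGm
  set C : Set V := {v | Gm.Reachable z0 v} with hC
  have hCval : ∀ v ∈ C, ψ v = m := by
    have aux : ∀ u v, ψ u = m → Gm.Walk u v → ψ v = m := by
      intro u v hu w
      induction w with
      | nil => exact hu
      | cons h w ih => exact ih h.2.2
    intro v hv
    obtain ⟨w⟩ := hv
    exact aux z0 v hz0 w
  have hz0C : z0 ∈ C := SimpleGraph.Reachable.refl _
  have hclosedC : ∀ u v, u ∈ C → Gm.Adj u v → v ∈ C := fun u v hu h => hu.trans h.reachable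
  have hCnb : ∀ u v, u ∈ C → G.Adj u v → v ∈ C ∨ (v ∉ C ∧ m < ψ v) := by
    intro u v hu hadj
    by_cases hv : ψ v = m
    · exact Or.inl (hclosedC u v hu ⟨hadj, hCval u hu, hv⟩)
    · refine Or.inr ⟨fun h => hv (hCval v h), ?_⟩
      exact lt_of_le_of_ne (hge u v hadj (hCval u hu)) (fun h => hv h.symm)
  have claim1 : ∀ u w, u ∉ C → w ∉ C → u ≠ w →
      (∃ x ∈ C, G.Adj u x) → (∃ x ∈ C, G.Adj w x) → G.Adj u w := by
    rintro u w huC hwC huw ⟨xu, hxuC, haxu⟩ ⟨xw, hxwC, haxw⟩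
    by_contra hnadj
    have hum : m < ψ u := by
      rcases hCnb xu u hxuC haxu.symm with h | h
      · exact absurd h huC
      · exact h.2
    have hwm : m < ψ w := by
      rcases hCnb xw w hxwC haxw.symm with h | h
      · exact absurd h hwC
      · exact h.2
    have hex : ∃ n v, GoodSeq G C u w n v :=
      goodSeq_exists G (Hw := Gm) (fun a b h => h.1) hclosedC hxuC
        (hxuC.symm.trans hxwC) haxu haxw.symm
    obtain ⟨n, hQ, hminn⟩ : ∃ n, (∃ v, GoodSeq G C u w n v) ∧
        ∀ k, (∃ v, GoodSeq G C u w k v) → n ≤ k :=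
      ⟨Nat.find hex, Nat.find_spec hex, fun k hk => Nat.find_min' hex hk⟩
    obtain ⟨vseq, gv⟩ := hQ
    have minv : ∀ k u', GoodSeq G C u w k u' → n ≤ k := fun k u' h => hminn k ⟨u', h⟩
    obtain ⟨injv, indv⟩ := goodSeq_min G gv minv
    obtain ⟨hv0, hvn, hvadj, hvW⟩ := gv
    have hn2 : 2 ≤ n := by
      by_contra h
      interval_cases n
      · exact huw (hv0.symm.trans hvn)
      · have h01 := hvadj 0 (by norm_num)
        rw [hv0, show (0 + 1 : ℕ) = 1 by norm_num, hvn] at h01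
        exact hnadj h01
    have h1m : ψ (vseq 1) = m := hCval _ (hvW 1 (by omega) (by omega))
    apply hnopath
    refine ⟨n + 1, vseq, by omega, ⟨⟨?_, ?_⟩, ?_⟩, ?_, ?_, ?_⟩
    · intro i j hi hj hij
      exact injv i j (by omega) (by omega) hij
    · intro i hi
      exact hvadj i (by omega)
    · intro i j hi hj hadj
      exact indv i j (by omega) (by omega) hadj
    · rw [h1m, hv0]; exact hum
    · intro j hj1 hj2
      have hj : ψ (vseq j) = m := hCval _ (hvW j hj1 (by omega))
      rw [h1m, hj]
    · rw [h1m, show n + 1 - 1 = n by omega, hvn]; exact hwm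
  set Nst : Set V := {u | u ∉ C ∧ ∃ x ∈ C, G.Adj u x} with hNst
  set T : Set V := C ∪ Nst with hT
  have hnbT : ∀ z ∈ C, ∀ w, G.Adj z w → w ∈ T := by
    intro z hz w hw
    by_cases hwC : w ∈ C
    · exact Or.inl hwC
    · exact Or.inr ⟨hwC, z, hz, hw.symm⟩
  have hlocmin : ∀ z ∈ C, ∀ u, G.Adj z u → ψ z ≤ ψ u := by
    intro z hz u hu
    rw [hCval z hz]
    exact hge z u hu (hCval z hz)
  have hz0T : z0 ∈ T := Or.inl hz0C
  rcases dirac (Fintype.card ↥T) (G.induce T) le_rfl (chordal_induce G hchordal T) with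
    hcomp2 | ⟨z1, z2, hz12, hznadj, hs1, hs2⟩
  · refine ⟨z0, ?_, hlocmin z0 hz0C⟩
    intro p q hp hq hpq
    exact hcomp2 ⟨p, hnbT z0 hz0C p hp⟩ ⟨q, hnbT z0 hz0C q hq⟩
      (fun h => hpq (congrArg Subtype.val h))
  · have hnot : ¬ ((z1 : V) ∈ Nst ∧ (z2 : V) ∈ Nst) := by
      rintro ⟨h1, h2⟩
      exact hznadj (claim1 z1 z2 h1.1 h2.1 (fun h => hz12 (Subtype.ext h)) h1.2 h2.2)
    have pick : ∃ z : ↥T, (z : V) ∈ C ∧ IsSimplicialVertex (G.induce T) z := by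
      by_cases h1 : (z1 : V) ∈ C
      · exact ⟨z1, h1, hs1⟩
      · have h1' : (z1 : V) ∈ Nst := by
          rcases z1.2 with h | h
          · exact absurd h h1
          · exact h
        by_cases h2 : (z2 : V) ∈ C
        · exact ⟨z2, h2, hs2⟩
        · have h2' : (z2 : V) ∈ Nst := by
            rcases z2.2 with h | h
            · exact absurd h h2
            · exact h
          exact absurd ⟨h1', h2'⟩ hnot
    obtain ⟨z, hzC, hzs⟩ := pick
    refine ⟨z, ?_, hlocmin z hzC⟩
    intro p q hp hq hpq
    exact hzs ⟨p, hnbT z hzC p hp⟩ ⟨q, hnbT z hzC q hq⟩ hp hq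
      (fun h => hpq (congrArg Subtype.val h))
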